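/- Suppose ‖l̄‖ < c²/(4‖T‖³‖A₁‖), let r* with 0 < r* < c/(2‖T‖³‖A₁‖) satisfy ‖l̄‖ ≤ r*·(c − ‖A₁‖·‖T‖³·r*), and let ū be the unique element of (ker T)⊥ with ‖ū‖ ≤ r* and G ū + G₁(ū) = l̄. Then for every sequence (ū_n)_{n≥0} in H with ū₀ = 0 and, for all n ≥ 0, ū_{n+1} ∈ (ker T)⊥ and G ū_{n+1} = l̄ − G₁(ū_n) (the exact discrete fixed point iteration ū_{n+1} = 𝐇(ū_n)), the sequence ū_n converges in H to ū. -/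

import Mathlib

open scoped RealInnerProductSpace
open Filter Topology

/-- The exact discrete fixed point iteration `ū₀ = 0`, `G ū_{n+1} = l̄ − G₁(ū_n)` with
`ū_{n+1} ∈ Ran G = (ker T)ᗮ` converges to the unique solution `ū ∈ 𝐁_{r*}` of the
discrete nonlinear problem `G ū + G₁(ū) = l̄`. -/
theorem discrete_fixed_point_iteration_converges
    {V H : Type*} [NormedAddCommGroup V] [InnerProductSpace ℝ V] [CompleteSpace V]
    [NormedAddCommGroup H] [InnerProductSpace ℝ H] [CompleteSpace H]
    (B : V →L[ℝ] V) (α : ℝ) (hα : 0 < α)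
    (hB : ∀ v : V, α * ‖v‖ ^ 2 ≤ ⟪B v, v⟫)
    (T : H →L[ℝ] V) (hT : Function.Surjective T)
    (G : H →L[ℝ] H) (hG : G = (ContinuousLinearMap.adjoint T).comp (B.comp T))
    (c : ℝ) (hc : 0 < c) (hcG : ∀ x ∈ (LinearMap.ker (T : H →ₗ[ℝ] V))ᗮ, c * ‖x‖ ≤ ‖G x‖)
    (A₁ : V →L[ℝ] V →L[ℝ] V) (hA₁ : ‖A₁‖ ≠ 0)
    (G₁ : H → H) (hG₁ : ∀ x : H, G₁ x = ContinuousLinearMap.adjoint T (A₁ (T x) (T x)))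
    (lbar : H) (hlbar : lbar ∈ LinearMap.range (ContinuousLinearMap.adjoint T : V →ₗ[ℝ] H))
    (hl : ‖lbar‖ < c ^ 2 / (4 * ‖T‖ ^ 3 * ‖A₁‖))
    (rs : ℝ) (hrs : 0 < rs) (hrs' : rs < c / (2 * ‖T‖ ^ 3 * ‖A₁‖))
    (hlrs : ‖lbar‖ ≤ rs * (c - ‖A₁‖ * ‖T‖ ^ 3 * rs))
    (ubar : H) (hubar : ubar ∈ (LinearMap.ker (T : H →ₗ[ℝ] V))ᗮ ∧ ‖ubar‖ ≤ rs ∧ G ubar + G₁ ubar = lbar)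
    (hunique : ∀ u : H,
      u ∈ (LinearMap.ker (T : H →ₗ[ℝ] V))ᗮ → ‖u‖ ≤ rs → G u + G₁ u = lbar → u = ubar) :
    ∀ s : ℕ → H, s 0 = 0 →
      (∀ n : ℕ, s (n + 1) ∈ (LinearMap.ker (T : H →ₗ[ℝ] V))ᗮ ∧ G (s (n + 1)) = lbar - G₁ (s n)) →
      Tendsto s atTop (𝓝 ubar) := by
  intro s hs0 hs
  have hA₁pos : 0 < ‖A₁‖ := (norm_nonneg A₁).lt_of_ne (Ne.symm hA₁)
  have hTpos : 0 < ‖T‖ := by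
    rcases (norm_nonneg T).lt_or_eq with h | h
    · exact h
    · exfalso
      have hT0 : T = 0 := by rwa [eq_comm, norm_eq_zero] at h
      have hv : ∀ v : V, v = 0 := fun v => by
        obtain ⟨x, hx⟩ := hT v
        rw [hT0] at hx; simpa using hx.symm
      apply hA₁
      have hA0 : A₁ = 0 := by ext a b; rw [hv (A₁ a b)]; simp
      have h0 : ‖A₁‖ = ‖(0 : V →L[ℝ] V →L[ℝ] V)‖ := by rw [hA0]
      rw [h0]; exact ContinuousLinearMap.opNorm_zero
  set K := ‖T‖ ^ 3 * ‖A₁‖ with hKdef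
  have hKpos : 0 < K := by positivity
  have hTad : ‖(ContinuousLinearMap.adjoint T : V →L[ℝ] H)‖ = ‖T‖ :=
    ContinuousLinearMap.adjoint.norm_map T
  -- pointwise bound on the quadratic term
  have hGnorm : ∀ x : H, ‖G₁ x‖ ≤ K * ‖x‖ ^ 2 := by
    intro x
    rw [hG₁ x]
    calc ‖ContinuousLinearMap.adjoint T (A₁ (T x) (T x))‖
        ≤ ‖T‖ * ‖A₁ (T x) (T x)‖ := by
          simpa [hTad] using
            (ContinuousLinearMap.adjoint T).le_opNorm (A₁ (T x) (T x))
      _ ≤ ‖T‖ * (‖A₁‖ * ‖T x‖ * ‖T x‖) :=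
          mul_le_mul_of_nonneg_left (A₁.le_opNorm₂ (T x) (T x)) hTpos.le
      _ ≤ ‖T‖ * (‖A₁‖ * (‖T‖ * ‖x‖) * (‖T‖ * ‖x‖)) := by
          gcongr <;> exact T.le_opNorm x
      _ = K * ‖x‖ ^ 2 := by rw [hKdef]; ring
  -- Lipschitz-type difference bound
  have hdiff : ∀ u v : H, ‖G₁ u - G₁ v‖ ≤ K * (‖u‖ + ‖v‖) * ‖u - v‖ := by
    intro u v
    have hsplit : A₁ (T u) (T u) - A₁ (T v) (T v)
        = A₁ (T u - T v) (T u) + A₁ (T v) (T u - T v) := by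
      simp only [map_sub, ContinuousLinearMap.sub_apply]
      abel
    have h1 : ‖G₁ u - G₁ v‖ ≤ ‖T‖ * ‖A₁ (T u) (T u) - A₁ (T v) (T v)‖ := by
      rw [hG₁ u, hG₁ v, ← map_sub]
      simpa [hTad] using
        (ContinuousLinearMap.adjoint T).le_opNorm (A₁ (T u) (T u) - A₁ (T v) (T v))
    have h2 : ‖A₁ (T u) (T u) - A₁ (T v) (T v)‖
        ≤ ‖A₁‖ * (‖T u‖ + ‖T v‖) * ‖T u - T v‖ := by
      rw [hsplit]
      calc ‖A₁ (T u - T v) (T u) + A₁ (T v) (T u - T v)‖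
          ≤ ‖A₁ (T u - T v) (T u)‖ + ‖A₁ (T v) (T u - T v)‖ := norm_add_le _ _
        _ ≤ ‖A₁‖ * ‖T u - T v‖ * ‖T u‖ + ‖A₁‖ * ‖T v‖ * ‖T u - T v‖ :=
            add_le_add (A₁.le_opNorm₂ _ _) (A₁.le_opNorm₂ _ _)
        _ = ‖A₁‖ * (‖T u‖ + ‖T v‖) * ‖T u - T v‖ := by ring
    have hTu := T.le_opNorm u
    have hTv := T.le_opNorm v
    have hTuv : ‖T u - T v‖ ≤ ‖T‖ * ‖u - v‖ := by
      simpa [map_sub] using T.le_opNorm (u - v)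
    calc ‖G₁ u - G₁ v‖ ≤ ‖T‖ * ‖A₁ (T u) (T u) - A₁ (T v) (T v)‖ := h1
      _ ≤ ‖T‖ * (‖A₁‖ * (‖T u‖ + ‖T v‖) * ‖T u - T v‖) := by gcongr
      _ ≤ ‖T‖ * (‖A₁‖ * (‖T‖ * ‖u‖ + ‖T‖ * ‖v‖) * (‖T‖ * ‖u - v‖)) := by
          gcongr <;> first | exact hTu | exact hTv | exact hTuv
      _ = K * (‖u‖ + ‖v‖) * ‖u - v‖ := by rw [hKdef]; ring
  -- membership of iterates
  have hmem : ∀ n, s n ∈ (LinearMap.ker (T : H →ₗ[ℝ] V))ᗮ := by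
    intro n
    cases n with
    | zero => rw [hs0]; exact Submodule.zero_mem _
    | succ n => exact (hs n).1
  -- norm bound on iterates
  have hbound : ∀ n, ‖s n‖ ≤ rs := by
    intro n
    induction n with
    | zero => rw [hs0, norm_zero]; exact hrs.le
    | succ n ih =>
      have h1 := hcG _ (hs n).1
      rw [(hs n).2] at h1
      have h2 : ‖lbar - G₁ (s n)‖ ≤ ‖lbar‖ + ‖G₁ (s n)‖ := norm_sub_le _ _
      have h3 := hGnorm (s n)
      have h4 : K * ‖s n‖ ^ 2 ≤ K * rs ^ 2 :=
        mul_le_mul_of_nonneg_left (pow_le_pow_left₀ (norm_nonneg _) ih 2) hKpos.le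
      have hK' : rs * (c - ‖A₁‖ * ‖T‖ ^ 3 * rs) = rs * c - K * rs ^ 2 := by
        rw [hKdef]; ring
      have h5 : c * ‖s (n + 1)‖ ≤ rs * c := by
        rw [hK'] at hlrs
        linarith
      nlinarith [hc, h5]
  -- contraction factor
  set q := 2 * K * rs / c with hqdef
  have hq0 : 0 ≤ q := by positivity
  have hq1 : q < 1 := by
    rw [hqdef, div_lt_one hc]
    have h2K : 0 < 2 * ‖T‖ ^ 3 * ‖A₁‖ := by positivity
    rw [lt_div_iff₀ h2K] at hrs'
    calc 2 * K * rs = rs * (2 * ‖T‖ ^ 3 * ‖A₁‖) := by rw [hKdef]; ring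
      _ < c := hrs'
  -- one-step contraction
  have hstep : ∀ n, ‖s (n + 1) - ubar‖ ≤ q * ‖s n - ubar‖ := by
    intro n
    have hdmem : s (n + 1) - ubar ∈ (LinearMap.ker (T : H →ₗ[ℝ] V))ᗮ :=
      Submodule.sub_mem _ (hs n).1 hubar.1
    have h1 := hcG _ hdmem
    have hGu : G ubar = lbar - G₁ ubar := eq_sub_of_add_eq hubar.2.2
    have h2 : G (s (n + 1) - ubar) = G₁ ubar - G₁ (s n) := by
      rw [map_sub, (hs n).2, hGu]; abel
    rw [h2] at h1
    have h4 : ‖G₁ ubar - G₁ (s n)‖ ≤ K * (‖ubar‖ + ‖s n‖) * ‖ubar - s n‖ := hdiff ubar (s n)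
    rw [norm_sub_rev ubar (s n)] at h4
    have h6 : K * (‖ubar‖ + ‖s n‖) * ‖s n - ubar‖ ≤ 2 * K * rs * ‖s n - ubar‖ := by
      have hsum : ‖ubar‖ + ‖s n‖ ≤ 2 * rs := by linarith [hubar.2.1, hbound n]
      calc K * (‖ubar‖ + ‖s n‖) * ‖s n - ubar‖
          ≤ K * (2 * rs) * ‖s n - ubar‖ :=
            mul_le_mul_of_nonneg_right (mul_le_mul_of_nonneg_left hsum hKpos.le)
              (norm_nonneg _)
        _ = 2 * K * rs * ‖s n - ubar‖ := by ring
    rw [hqdef, div_mul_eq_mul_div, le_div_iff₀ hc, mul_comm]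
    exact le_trans h1 (le_trans h4 h6)
  -- geometric decay
  have hgeo : ∀ n, ‖s n - ubar‖ ≤ q ^ n * ‖s 0 - ubar‖ := by
    intro n
    induction n with
    | zero => simp
    | succ n ih =>
      calc ‖s (n + 1) - ubar‖ ≤ q * ‖s n - ubar‖ := hstep n
        _ ≤ q * (q ^ n * ‖s 0 - ubar‖) := mul_le_mul_of_nonneg_left ih hq0
        _ = q ^ (n + 1) * ‖s 0 - ubar‖ := by ring
  rw [tendsto_iff_norm_sub_tendsto_zero]
  have hlim : Tendsto (fun n => q ^ n * ‖s 0 - ubar‖) atTop (𝓝 0) := by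
    have := (tendsto_pow_atTop_nhds_zero_of_lt_one hq0 hq1).mul_const (‖s 0 - ubar‖)
    simpa using this
  exact squeeze_zero (fun n => norm_nonneg _) hgeo hlim
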